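/- In the setting of the Hölder-regularity theorem, let T > 0 bound ‖P‖ and ‖P^{-1}‖ on X_ε and let L be the holonomy constant of the holonomy block O. Suppose y ∈ Δ_ε and x₂ ∈ W^s_loc(y), and that there is a sequence m_k → +∞ with f^{m_k}(y), f^{m_k}(x₂) ∈ X_ε ∩ O for all k. Then ‖Id − P(x₂)P(y)^{-1}‖ ≤ ‖H^{s,A}_{y x₂} − Id‖, and consequently ‖P(y) − P(x₂)‖ ≤ T·L·dist(y, x₂)^α. -/

import Mathlib

open MeasureTheory Filter Metric Set Function
open scoped Topology NNReal Manifold ENNReal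

noncomputable section

abbrev Euc (m : ℕ) := EuclideanSpace ℝ (Fin m)
abbrev GLd (d : ℕ) := (Euc d →L[ℝ] Euc d)ˣ

def cocycle {M : Type*} {d : ℕ} (f : M → M) (A : M → GLd d) : ℕ → M → GLd d
  | 0, _ => 1
  | n + 1, x => A (f^[n] x) * cocycle f A n x

def cocycleCLM {M : Type*} {d : ℕ} (f : M → M) (A : M → GLd d) (n : ℕ) (x : M) :
    Euc d →L[ℝ] Euc d := (cocycle f A n x : Euc d →L[ℝ] Euc d)

def cocycleInv {M : Type*} {d : ℕ} (f : M → M) (A : M → GLd d) (n : ℕ) (x : M) :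
    Euc d →L[ℝ] Euc d := (((cocycle f A n x)⁻¹ : GLd d) : Euc d →L[ℝ] Euc d)

def PeriodicObstructionVanishes {M : Type*} {d : ℕ} (f : M → M) (A : M → GLd d) : Prop :=
  ∀ n : ℕ, 0 < n → ∀ p : M, f^[n] p = p → cocycle f A n p = 1

def fwdOrbit {M : Type*} (f : M → M) (x : M) : Set M := Set.range fun n : ℕ => f^[n] x

def measSupport {M : Type*} [TopologicalSpace M] [MeasurableSpace M] (μ : Measure M) : Set M :=
  {x | ∀ U ∈ nhds x, 0 < μ U}

def stableSet {M : Type*} [MetricSpace M] (f : M → M) (x : M) : Set M :=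
  {y | Tendsto (fun n : ℕ => dist (f^[n] y) (f^[n] x)) atTop (𝓝 0)}

def localStable {M : Type*} [MetricSpace M] (f : M → M) (δ : ℝ) (x : M) : Set M :=
  stableSet f x ∩ closedBall x δ

def hyperbolicBlock {M : Type*} [MetricSpace M] (f g : M → M) (C τ δ : ℝ) : Set M :=
  {x | (∀ y ∈ localStable f δ x, ∀ n : ℕ,
          dist (f^[n] y) (f^[n] x) ≤ C * Real.exp (-τ * n) * dist y x) ∧
       (∀ y ∈ localStable g δ x, ∀ n : ℕ,
          dist (g^[n] y) (g^[n] x) ≤ C * Real.exp (-τ * n) * dist y x)}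

def dominationSet {M : Type*} {d : ℕ} (f g : M → M) (A : M → GLd d) (N : ℕ) (θ : ℝ) :
    Set M :=
  {x | (∀ k : ℕ, 1 ≤ k →
          ∏ j ∈ Finset.range k,
            (‖cocycleCLM f A N (f^[j * N] x)‖ * ‖cocycleInv f A N (f^[j * N] x)‖)
            ≤ Real.exp (θ * k * N)) ∧
       (∀ k : ℕ, 1 ≤ k →
          ∏ j ∈ Finset.range k,
            (‖cocycleCLM g (fun y => (A (g y))⁻¹) N (g^[j * N] x)‖ *
             ‖cocycleInv g (fun y => (A (g y))⁻¹) N (g^[j * N] x)‖)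
            ≤ Real.exp (θ * k * N))}

def ClosingProperty {M : Type*} [MetricSpace M] (f : M → M) (G : Set M) (C η h β : ℝ) : Prop :=
  ∀ y ∈ G, ∀ n : ℕ, dist (f^[n] y) y < β → f^[n] y ∈ G →
    ∃ p : M, f^[n] p = p ∧
      ∀ i : ℕ, i ≤ n → dist (f^[i] y) (f^[i] p) ≤ h * C * Real.exp (-η * (min i (n - i) : ℕ))

def freqGT {M : Type*} (T : M → M) (S : Set M) (x : M) : Prop :=
  ∃ c : ℝ, 1 / 2 < c ∧
    Tendsto (fun n : ℕ => (∑ i ∈ Finset.Icc 1 n, S.indicator (fun _ => (1 : ℝ)) (T^[i] x)) / n)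
      atTop (𝓝 c)

def freqCond {M : Type*} (f g : M → M) (S : Set M) (x : M) : Prop :=
  freqGT f S x ∧ freqGT g S x

section Manifold

variable {m : ℕ} {M : Type*} [MetricSpace M] [CompactSpace M]
  [ChartedSpace (Euc m) M] [IsManifold (𝓡 m) ((⊤ : ℕ∞) : WithTop ℕ∞) M]

def tangentNorm {x : M} (v : TangentSpace (𝓡 m) x) : ℝ := ‖show Euc m from v‖

def IsC1HolderDiffeo (f : M → M) : Prop :=
  ∃ g : M → M, Function.LeftInverse g f ∧ Function.RightInverse g f ∧
    ContMDiff (𝓡 m) (𝓡 m) 1 f ∧ ContMDiff (𝓡 m) (𝓡 m) 1 g ∧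
    ∃ εh K : ℝ≥0, 0 < εh ∧ ∀ x : M,
      HolderOnWith K εh (fderiv ℝ (writtenInExtChartAt (𝓡 m) (𝓡 m) x f))
        (extChartAt (𝓡 m) x).target

def IsHyperbolicMeasure [MeasurableSpace M] (f : M → M) (μ : Measure M) : Prop :=
  ∀ᵐ x ∂μ, ∀ v : TangentSpace (𝓡 m) x, v ≠ 0 →
    ∃ lam : ℝ, lam ≠ 0 ∧
      Tendsto (fun n : ℕ => Real.log (tangentNorm (mfderiv (𝓡 m) (𝓡 m) (f^[n]) x v)) / n)
        atTop (𝓝 lam)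

def IsChiHyperbolic [MeasurableSpace M] (f : M → M) (μ : Measure M) (χ : ℝ) : Prop :=
  0 < χ ∧ ∀ᵐ x ∂μ, ∀ v : TangentSpace (𝓡 m) x, v ≠ 0 →
    ∃ lam : ℝ, χ < |lam| ∧
      Tendsto (fun n : ℕ => Real.log (tangentNorm (mfderiv (𝓡 m) (𝓡 m) (f^[n]) x v)) / n)
        atTop (𝓝 lam)

def pesinSet (f g : M → M) (χ ε N : ℝ) : Set M :=
  {x | ∃ Es Eu : Submodule ℝ (TangentSpace (𝓡 m) x),
    Es ⊔ Eu = ⊤ ∧ Es ⊓ Eu = ⊥ ∧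
    (∀ v ∈ Es, ∀ n : ℕ,
      tangentNorm (mfderiv (𝓡 m) (𝓡 m) (f^[n]) x v) ≤
        N * Real.exp (-(χ - ε) * n) * tangentNorm v) ∧
    (∀ v ∈ Eu, ∀ n : ℕ,
      tangentNorm (mfderiv (𝓡 m) (𝓡 m) (g^[n]) x v) ≤
        N * Real.exp (-(χ - ε) * n) * tangentNorm v)}

end Manifold

def HasLocalProductStructure {M : Type*} [MetricSpace M] [MeasurableSpace M]
    (f g : M → M) (μ : Measure M) : Prop :=
  ∃ δ₀ : ℝ, 0 < δ₀ ∧ ∀ x ∈ measSupport μ, ∀ δ : ℝ, 0 < δ → δ ≤ δ₀ →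
    ∃ (Nu Ns : Set M) (b : M → M → M) (μu μs : Measure M),
      IsCompact Nu ∧ IsCompact Ns ∧ x ∈ Nu ∧ x ∈ Ns ∧
      Nu ⊆ localStable g δ x ∧ Ns ⊆ localStable f δ x ∧
      (∀ z ∈ Nu, ∀ w ∈ Ns, b z w ∈ stableSet f z ∩ stableSet g w) ∧
      Set.InjOn (fun p : M × M => b p.1 p.2) (Nu ×ˢ Ns) ∧
      μu (Set.univ \ Nu) = 0 ∧ μs (Set.univ \ Ns) = 0 ∧
      μ.restrict (Set.image2 b Nu Ns) ≪
        Measure.map (fun p : M × M => b p.1 p.2) (μu.prod μs) ∧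
      Measure.map (fun p : M × M => b p.1 p.2) (μu.prod μs) ≪
        μ.restrict (Set.image2 b Nu Ns)

def topLyapunov {M : Type*} {d : ℕ} (f : M → M) (A : M → GLd d) (x : M) : ℝ :=
  Filter.limsup (fun n : ℕ => Real.log ‖cocycleCLM f A n x‖ / n) Filter.atTop

def IsSDominated {M : Type*} [MetricSpace M] {d : ℕ} (f g : M → M) (A : M → GLd d)
    (s : ℝ) (x : M) : Prop :=
  ∃ (Cc τ δ θ : ℝ) (N : ℕ), 0 < Cc ∧ 0 < τ ∧ 0 < δ ∧ 0 < θ ∧ 1 ≤ N ∧ s * θ < τ ∧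
    x ∈ hyperbolicBlock f g Cc τ δ ∩ dominationSet f g A N θ

def zOrbit {M : Type*} (f g : M → M) (x : M) : Set M :=
  {y | (∃ n : ℕ, f^[n] x = y) ∨ ∃ n : ℕ, g^[n] x = y}

/-- **The key holonomy estimate in the proof of Theorem 1.2.** If `T` bounds `‖P‖` and
`‖P⁻¹‖` on `X_ε`, `L` is the holonomy constant of the holonomy block, `y ∈ Δ_ε`,
`x₂ ∈ W^s_loc(y)` and `f^{m_k}(y), f^{m_k}(x₂) ∈ X_ε ∩ 𝔒` along a sequence `m_k → ∞`,
then `‖Id - P(x₂)P(y)⁻¹‖ ≤ ‖H^{s,A}_{y x₂} - Id‖` and consequently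
`‖P(y) - P(x₂)‖ ≤ T L dist(y,x₂)^α`. -/
theorem holonomy_estimate_for_P
    {m d : ℕ} {M : Type*} [MetricSpace M] [CompactSpace M] [Nonempty M]
    [ChartedSpace (Euc m) M] [IsManifold (𝓡 m) ((⊤ : ℕ∞) : WithTop ℕ∞) M]
    [MeasurableSpace M] [BorelSpace M]
    (f g : M → M) (hf : IsC1HolderDiffeo (m := m) f)
    (hgf : Function.LeftInverse g f) (hfg : Function.RightInverse g f)
    (μ : Measure M) [IsProbabilityMeasure μ] [NullSingletonClass μ]
    (herg : Ergodic f μ) (hhyp : IsHyperbolicMeasure (m := m) f μ)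
    (hlps : HasLocalProductStructure f g μ)
    (A : M → GLd d) (α K : ℝ≥0) (hα : 0 < α)
    (hA : HolderWith K α fun w => (A w : Euc d →L[ℝ] Euc d))
    (P : M → GLd d) (hPmeas : Measurable fun w => (P w : Euc d →L[ℝ] Euc d))
    (hP : ∀ᵐ w ∂μ, A w = P (f w) * (P w)⁻¹)
    (ε : ℝ) (hε0 : 0 < ε) (hε1 : ε < 1 / 10)
    (Cc τ δ θ : ℝ) (N : ℕ) (hCc : 0 < Cc) (hτ : 0 < τ) (hδ : 0 < δ) (hθ : 0 < θ)
    (hN : 1 ≤ N) (hbunch : 2 * θ < τ)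
    (O : Set M) (hOcomp : IsCompact O)
    (hOblock : O ⊆ hyperbolicBlock f g Cc τ δ ∩ dominationSet f g A N θ)
    (hOμ : 1 - ENNReal.ofReal (ε / 2) < μ O)
    (X : Set M) (hXcomp : IsCompact X)
    (hXμ : 1 - ENNReal.ofReal (ε / 2) < μ X)
    (hPuc : UniformContinuousOn (fun w => (P w : Euc d →L[ℝ] Euc d)) X)
    (Xt : Set M) (hXt : Xt ⊆ X ∩ O)
    (T L : ℝ) (hT : 0 < T) (hL : 0 < L)
    (hPT : ∀ w ∈ X, ‖(P w : Euc d →L[ℝ] Euc d)‖ ≤ T ∧ ‖(((P w)⁻¹ : GLd d) : Euc d →L[ℝ] Euc d)‖ ≤ T)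
    (y x₂ : M) (hy : y ∈ Xt ∩ measSupport μ) (hx₂ : x₂ ∈ localStable f δ y)
    (hPcocy : ∀ k : ℕ, P (f^[k] y) = cocycle f A k y * P y)
    (hPcocy₂ : ∀ k : ℕ, P (f^[k] x₂) = cocycle f A k x₂ * P x₂)
    (Hs : Euc d →L[ℝ] Euc d)
    (hHs : Tendsto (fun n : ℕ => cocycleInv f A n x₂ * cocycleCLM f A n y) atTop (𝓝 Hs))
    (hHsL : ‖Hs - 1‖ ≤ L * dist y x₂ ^ (α : ℝ))
    (mk : ℕ → ℕ) (hmk : Tendsto mk atTop atTop)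
    (hmkX : ∀ k : ℕ, f^[mk k] y ∈ X ∩ O ∧ f^[mk k] x₂ ∈ X ∩ O) :
    ‖1 - (P x₂ : Euc d →L[ℝ] Euc d) * (((P y)⁻¹ : GLd d) : Euc d →L[ℝ] Euc d)‖ ≤ ‖Hs - 1‖ ∧
    ‖(P y : Euc d →L[ℝ] Euc d) - (P x₂ : Euc d →L[ℝ] Euc d)‖ ≤ T * L * dist y x₂ ^ (α : ℝ) := by
  have hyX : y ∈ X := (hXt hy.1).1
  have hx₂s : Tendsto (fun n : ℕ => dist (f^[n] x₂) (f^[n] y)) atTop (𝓝 0) := hx₂.1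
  have hdist : Tendsto (fun k => dist (f^[mk k] x₂) (f^[mk k] y)) atTop (𝓝 0) :=
    hx₂s.comp hmk
  -- P images get close along the sequence
  have hPdist : Tendsto (fun k => dist ((P (f^[mk k] y) : Euc d →L[ℝ] Euc d))
      ((P (f^[mk k] x₂) : Euc d →L[ℝ] Euc d))) atTop (𝓝 0) := by
    rw [Metric.tendsto_atTop] at hdist ⊢
    intro e he
    rw [Metric.uniformContinuousOn_iff] at hPuc
    obtain ⟨δ', hδ', hPd⟩ := hPuc e he
    obtain ⟨Nk, hNk⟩ := hdist δ' hδ'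
    refine ⟨Nk, fun k hk => ?_⟩
    have h1 := hNk k hk
    rw [Real.dist_eq, sub_zero, abs_of_nonneg dist_nonneg] at h1 ⊢
    exact hPd _ (hmkX k).1.1 _ (hmkX k).2.1 (by rw [dist_comm]; exact h1)
  set Q : ℕ → (Euc d →L[ℝ] Euc d) := fun k =>
    (((P (f^[mk k] x₂))⁻¹ : GLd d) : Euc d →L[ℝ] Euc d) *
      ((P (f^[mk k] y) : GLd d) : Euc d →L[ℝ] Euc d) with hQdef
  have hQnorm : ∀ k, ‖Q k - 1‖ ≤
      T * dist ((P (f^[mk k] y) : Euc d →L[ℝ] Euc d)) ((P (f^[mk k] x₂) : Euc d →L[ℝ] Euc d)) := by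
    intro k
    have hinv : (((P (f^[mk k] x₂))⁻¹ : GLd d) : Euc d →L[ℝ] Euc d) *
        ((P (f^[mk k] x₂) : GLd d) : Euc d →L[ℝ] Euc d) = 1 := by
      rw [← Units.val_mul, inv_mul_cancel, Units.val_one]
    have heq : Q k - 1 = (((P (f^[mk k] x₂))⁻¹ : GLd d) : Euc d →L[ℝ] Euc d) *
        (((P (f^[mk k] y) : GLd d) : Euc d →L[ℝ] Euc d) -
         ((P (f^[mk k] x₂) : GLd d) : Euc d →L[ℝ] Euc d)) := by
      rw [mul_sub, hinv, hQdef]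
    rw [heq, dist_eq_norm]
    calc ‖(((P (f^[mk k] x₂))⁻¹ : GLd d) : Euc d →L[ℝ] Euc d) *
        (((P (f^[mk k] y) : GLd d) : Euc d →L[ℝ] Euc d) -
         ((P (f^[mk k] x₂) : GLd d) : Euc d →L[ℝ] Euc d))‖
        ≤ ‖(((P (f^[mk k] x₂))⁻¹ : GLd d) : Euc d →L[ℝ] Euc d)‖ *
          ‖((P (f^[mk k] y) : GLd d) : Euc d →L[ℝ] Euc d) -
           ((P (f^[mk k] x₂) : GLd d) : Euc d →L[ℝ] Euc d)‖ := norm_mul_le _ _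
      _ ≤ T * ‖((P (f^[mk k] y) : GLd d) : Euc d →L[ℝ] Euc d) -
           ((P (f^[mk k] x₂) : GLd d) : Euc d →L[ℝ] Euc d)‖ :=
          mul_le_mul_of_nonneg_right (hPT _ (hmkX k).2.1).2 (norm_nonneg _)
  have hQ1 : Tendsto Q atTop (𝓝 1) := by
    rw [tendsto_iff_norm_sub_tendsto_zero]
    refine squeeze_zero (fun k => norm_nonneg _) hQnorm ?_
    simpa using hPdist.const_mul T
  -- identify the cocycle expression
  have hcy : ∀ k : ℕ, cocycle f A k y = P (f^[k] y) * (P y)⁻¹ := by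
    intro k; rw [hPcocy k, mul_assoc, mul_inv_cancel, mul_one]
  have hcx : ∀ k : ℕ, (cocycle f A k x₂)⁻¹ = P x₂ * (P (f^[k] x₂))⁻¹ := by
    intro k
    rw [hPcocy₂ k, mul_inv_rev, ← mul_assoc, mul_inv_cancel, one_mul]
  have hEeq : ∀ k : ℕ, cocycleInv f A (mk k) x₂ * cocycleCLM f A (mk k) y =
      ((P x₂ : GLd d) : Euc d →L[ℝ] Euc d) * Q k * (((P y)⁻¹ : GLd d) : Euc d →L[ℝ] Euc d) := by
    intro k
    rw [cocycleInv, cocycleCLM, hcx, hcy, hQdef]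
    simp only [Units.val_mul]
    simp [mul_assoc]
  have hElim : Tendsto (fun k => cocycleInv f A (mk k) x₂ * cocycleCLM f A (mk k) y) atTop
      (𝓝 (((P x₂ : GLd d) : Euc d →L[ℝ] Euc d) *
        (((P y)⁻¹ : GLd d) : Euc d →L[ℝ] Euc d))) := by
    have : Tendsto (fun k => ((P x₂ : GLd d) : Euc d →L[ℝ] Euc d) * Q k *
        (((P y)⁻¹ : GLd d) : Euc d →L[ℝ] Euc d)) atTop
        (𝓝 (((P x₂ : GLd d) : Euc d →L[ℝ] Euc d) * 1 *
          (((P y)⁻¹ : GLd d) : Euc d →L[ℝ] Euc d))) :=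
      (tendsto_const_nhds.mul hQ1).mul tendsto_const_nhds
    rw [mul_one] at this
    exact this.congr fun k => (hEeq k).symm
  have hHseq : Hs = ((P x₂ : GLd d) : Euc d →L[ℝ] Euc d) *
      (((P y)⁻¹ : GLd d) : Euc d →L[ℝ] Euc d) :=
    tendsto_nhds_unique (hHs.comp hmk) hElim
  have h1 : ‖1 - (P x₂ : Euc d →L[ℝ] Euc d) * (((P y)⁻¹ : GLd d) : Euc d →L[ℝ] Euc d)‖
      = ‖Hs - 1‖ := by rw [hHseq, norm_sub_rev]
  refine ⟨le_of_eq h1, ?_⟩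
  have hPy1 : (((P y)⁻¹ : GLd d) : Euc d →L[ℝ] Euc d) *
      ((P y : GLd d) : Euc d →L[ℝ] Euc d) = 1 := by
    rw [← Units.val_mul, inv_mul_cancel, Units.val_one]
  have hfact : (P y : Euc d →L[ℝ] Euc d) - (P x₂ : Euc d →L[ℝ] Euc d) =
      (1 - (P x₂ : Euc d →L[ℝ] Euc d) * (((P y)⁻¹ : GLd d) : Euc d →L[ℝ] Euc d)) *
        (P y : Euc d →L[ℝ] Euc d) := by
    rw [sub_mul, one_mul, mul_assoc, hPy1, mul_one]
  rw [hfact]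
  calc ‖(1 - (P x₂ : Euc d →L[ℝ] Euc d) * (((P y)⁻¹ : GLd d) : Euc d →L[ℝ] Euc d)) *
        (P y : Euc d →L[ℝ] Euc d)‖
      ≤ ‖1 - (P x₂ : Euc d →L[ℝ] Euc d) * (((P y)⁻¹ : GLd d) : Euc d →L[ℝ] Euc d)‖ *
        ‖(P y : Euc d →L[ℝ] Euc d)‖ := norm_mul_le _ _
    _ ≤ (L * dist y x₂ ^ (α : ℝ)) * T := by
        refine mul_le_mul ?_ (hPT y hyX).1 (norm_nonneg _) ?_
        · rw [h1]; exact hHsL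
        · positivity
    _ = T * L * dist y x₂ ^ (α : ℝ) := by ring
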